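/- Let n₁, n₂ ∈ ℝ⁴ be vectors spanning a 2-dimensional subspace of ℝ⁴ that is totally null with respect to B, and set p_{ij} = n₁ᵢ n₂ⱼ − n₁ⱼ n₂ᵢ for 1 ≤ i < j ≤ 4 (the Plücker coordinates of the bivector n₁ ∧ n₂). Then exactly one of the following two alternatives holds: either p₁₂ = p₃₄, p₁₃ = p₂₄ and p₁₄ = −p₂₃ (the selfdual case), or p₁₂ = −p₃₄, p₁₃ = −p₂₄ and p₁₄ = p₂₃ (the antiselfdual case). In other words, the bivector associated with a totally null 2-plane is an eigenvector of the Hodge star operator. -/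

import Mathlib

/-- The standard split signature bilinear form on ℝ⁴ = ℝ^(2,2). -/
def B (y z : Fin 4 → ℝ) : ℝ := y 0 * z 0 + y 1 * z 1 - y 2 * z 2 - y 3 * z 3

/-- A subspace of ℝ⁴ is totally null w.r.t. `B` if `B` vanishes identically on it. -/
def TotallyNull (N : Submodule ℝ (Fin 4 → ℝ)) : Prop :=
  ∀ v ∈ N, ∀ w ∈ N, B v w = 0

/-- The Plücker coordinates of the bivector `n₁ ∧ n₂`. -/
def pluecker (n₁ n₂ : Fin 4 → ℝ) (i j : Fin 4) : ℝ := n₁ i * n₂ j - n₁ j * n₂ i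

/-- If all cross products agree, the pair spans a subspace of rank at most one. -/
lemma rank_le_one_aux (n₁ n₂ : Fin 4 → ℝ)
    (hp : ∀ i j : Fin 4, n₁ i * n₂ j = n₁ j * n₂ i) :
    Module.finrank ℝ (Submodule.span ℝ ({n₁, n₂} : Set (Fin 4 → ℝ))) ≤ 1 := by
  rcases eq_or_ne n₁ 0 with h | h
  · have hins : ({n₁, n₂} : Set (Fin 4 → ℝ)) = insert n₁ {n₂} := rfl
    rw [hins, Submodule.span_insert_eq_span (by simp [h])]
    rcases eq_or_ne n₂ 0 with h2 | h2
    · rw [h2, Submodule.span_zero_singleton]; simp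
    · exact le_of_eq (finrank_span_singleton h2)
  · obtain ⟨k, hk⟩ := Function.ne_iff.mp h
    simp only [Pi.zero_apply] at hk
    have hmem : n₂ ∈ Submodule.span ℝ ({n₁} : Set (Fin 4 → ℝ)) := by
      refine Submodule.mem_span_singleton.mpr ⟨n₂ k / n₁ k, ?_⟩
      funext i
      have := hp k i
      simp only [Pi.smul_apply, smul_eq_mul]; field_simp
      linarith [hp k i]
    rw [Set.pair_comm, Submodule.span_insert_eq_span hmem]
    exact le_of_eq (finrank_span_singleton h)

theorem stmt_4 (n₁ n₂ : Fin 4 → ℝ)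
    (hdim : Module.finrank ℝ (Submodule.span ℝ ({n₁, n₂} : Set (Fin 4 → ℝ))) = 2)
    (hnull : TotallyNull (Submodule.span ℝ ({n₁, n₂} : Set (Fin 4 → ℝ)))) :
    Xor'
      (pluecker n₁ n₂ 0 1 = pluecker n₁ n₂ 2 3 ∧
       pluecker n₁ n₂ 0 2 = pluecker n₁ n₂ 1 3 ∧
       pluecker n₁ n₂ 0 3 = -pluecker n₁ n₂ 1 2)
      (pluecker n₁ n₂ 0 1 = -pluecker n₁ n₂ 2 3 ∧
       pluecker n₁ n₂ 0 2 = -pluecker n₁ n₂ 1 3 ∧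
       pluecker n₁ n₂ 0 3 = pluecker n₁ n₂ 1 2) := by
  have hm1 : n₁ ∈ Submodule.span ℝ ({n₁, n₂} : Set (Fin 4 → ℝ)) :=
    Submodule.subset_span (by simp)
  have hm2 : n₂ ∈ Submodule.span ℝ ({n₁, n₂} : Set (Fin 4 → ℝ)) :=
    Submodule.subset_span (by simp)
  have e1 := hnull n₁ hm1 n₁ hm1
  have e2 := hnull n₁ hm1 n₂ hm2
  have e3 := hnull n₂ hm2 n₂ hm2
  unfold B at e1 e2 e3
  -- not both alternatives: otherwise all Plücker coordinates vanish
  have hne : ¬ ((pluecker n₁ n₂ 0 1 = pluecker n₁ n₂ 2 3 ∧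
       pluecker n₁ n₂ 0 2 = pluecker n₁ n₂ 1 3 ∧
       pluecker n₁ n₂ 0 3 = -pluecker n₁ n₂ 1 2) ∧
      (pluecker n₁ n₂ 0 1 = -pluecker n₁ n₂ 2 3 ∧
       pluecker n₁ n₂ 0 2 = -pluecker n₁ n₂ 1 3 ∧
       pluecker n₁ n₂ 0 3 = pluecker n₁ n₂ 1 2)) := by
    rintro ⟨⟨q1, q2, q3⟩, ⟨r1, r2, r3⟩⟩
    unfold pluecker at q1 q2 q3 r1 r2 r3
    have hp : ∀ i j : Fin 4, n₁ i * n₂ j = n₁ j * n₂ i := by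
      intro i j
      fin_cases i <;> fin_cases j <;> simp at * <;> linarith
    have := rank_le_one_aux n₁ n₂ hp
    omega
  -- the nine key identities s_i * t_j = 0
  have h00 : (pluecker n₁ n₂ 0 1 - pluecker n₁ n₂ 2 3) * (pluecker n₁ n₂ 0 1 + pluecker n₁ n₂ 2 3) = 0 := by
    unfold pluecker
    linear_combination (n₂ 2 ^ 2 + n₂ 3 ^ 2) * e1 + (n₁ 0 ^ 2 + n₁ 1 ^ 2) * e3 +
      (-(n₁ 0 * n₂ 0) - n₁ 1 * n₂ 1 - n₁ 2 * n₂ 2 - n₁ 3 * n₂ 3) * e2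
  have h01 : (pluecker n₁ n₂ 0 1 - pluecker n₁ n₂ 2 3) * (pluecker n₁ n₂ 0 2 + pluecker n₁ n₂ 1 3) = 0 := by
    unfold pluecker
    linear_combination (-(n₂ 0 * n₂ 3) + n₂ 1 * n₂ 2) * e1 + (-(n₁ 0 * n₁ 3) + n₁ 1 * n₁ 2) * e3 +
      (n₁ 0 * n₂ 3 - n₁ 1 * n₂ 2 - n₁ 2 * n₂ 1 + n₁ 3 * n₂ 0) * e2
  have h02 : (pluecker n₁ n₂ 0 1 - pluecker n₁ n₂ 2 3) * (pluecker n₁ n₂ 0 3 - pluecker n₁ n₂ 1 2) = 0 := by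
    unfold pluecker
    linear_combination (n₂ 0 * n₂ 2 + n₂ 1 * n₂ 3) * e1 + (n₁ 0 * n₁ 2 + n₁ 1 * n₁ 3) * e3 +
      (-(n₁ 0 * n₂ 2) - n₁ 1 * n₂ 3 - n₁ 2 * n₂ 0 - n₁ 3 * n₂ 1) * e2
  have h10 : (pluecker n₁ n₂ 0 2 - pluecker n₁ n₂ 1 3) * (pluecker n₁ n₂ 0 1 + pluecker n₁ n₂ 2 3) = 0 := by
    unfold pluecker
    linear_combination (n₂ 0 * n₂ 3 + n₂ 1 * n₂ 2) * e1 + (n₁ 0 * n₁ 3 + n₁ 1 * n₁ 2) * e3 +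
      (-(n₁ 0 * n₂ 3) - n₁ 1 * n₂ 2 - n₁ 2 * n₂ 1 - n₁ 3 * n₂ 0) * e2
  have h11 : (pluecker n₁ n₂ 0 2 - pluecker n₁ n₂ 1 3) * (pluecker n₁ n₂ 0 2 + pluecker n₁ n₂ 1 3) = 0 := by
    unfold pluecker
    linear_combination (n₂ 1 ^ 2 - n₂ 3 ^ 2) * e1 + (-(n₁ 0 ^ 2) + n₁ 2 ^ 2) * e3 +
      (n₁ 0 * n₂ 0 - n₁ 1 * n₂ 1 - n₁ 2 * n₂ 2 + n₁ 3 * n₂ 3) * e2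
  have h12 : (pluecker n₁ n₂ 0 2 - pluecker n₁ n₂ 1 3) * (pluecker n₁ n₂ 0 3 - pluecker n₁ n₂ 1 2) = 0 := by
    unfold pluecker
    linear_combination (n₂ 0 * n₂ 1 + n₂ 2 * n₂ 3) * e1 + (n₁ 0 * n₁ 1 + n₁ 2 * n₁ 3) * e3 +
      (-(n₁ 0 * n₂ 1) - n₁ 1 * n₂ 0 - n₁ 2 * n₂ 3 - n₁ 3 * n₂ 2) * e2
  have h20 : (pluecker n₁ n₂ 0 3 + pluecker n₁ n₂ 1 2) * (pluecker n₁ n₂ 0 1 + pluecker n₁ n₂ 2 3) = 0 := by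
    unfold pluecker
    linear_combination (-(n₂ 0 * n₂ 2) + n₂ 1 * n₂ 3) * e1 + (-(n₁ 0 * n₁ 2) + n₁ 1 * n₁ 3) * e3 +
      (n₁ 0 * n₂ 2 - n₁ 1 * n₂ 3 + n₁ 2 * n₂ 0 - n₁ 3 * n₂ 1) * e2
  have h21 : (pluecker n₁ n₂ 0 3 + pluecker n₁ n₂ 1 2) * (pluecker n₁ n₂ 0 2 + pluecker n₁ n₂ 1 3) = 0 := by
    unfold pluecker
    linear_combination (-(n₂ 0 * n₂ 1) + n₂ 2 * n₂ 3) * e1 + (-(n₁ 0 * n₁ 1) + n₁ 2 * n₁ 3) * e3 +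
      (n₁ 0 * n₂ 1 + n₁ 1 * n₂ 0 - n₁ 2 * n₂ 3 - n₁ 3 * n₂ 2) * e2
  have h22 : (pluecker n₁ n₂ 0 3 + pluecker n₁ n₂ 1 2) * (pluecker n₁ n₂ 0 3 - pluecker n₁ n₂ 1 2) = 0 := by
    unfold pluecker
    linear_combination (-(n₂ 0 ^ 2) + n₂ 3 ^ 2) * e1 + (n₁ 1 ^ 2 - n₁ 2 ^ 2) * e3 +
      (n₁ 0 * n₂ 0 - n₁ 1 * n₂ 1 + n₁ 2 * n₂ 2 - n₁ 3 * n₂ 3) * e2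
  by_cases hsel : pluecker n₁ n₂ 0 1 = pluecker n₁ n₂ 2 3 ∧
      pluecker n₁ n₂ 0 2 = pluecker n₁ n₂ 1 3 ∧
      pluecker n₁ n₂ 0 3 = -pluecker n₁ n₂ 1 2
  · exact Or.inl ⟨hsel, fun hr => hne ⟨hsel, hr⟩⟩
  · right
    refine ⟨?_, hsel⟩
    rw [not_and_or, not_and_or] at hsel
    rcases hsel with h | h | h
    · have hs : pluecker n₁ n₂ 0 1 - pluecker n₁ n₂ 2 3 ≠ 0 := sub_ne_zero.mpr h
      refine ⟨by linarith [(mul_eq_zero.mp h00).resolve_left hs],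
              by linarith [(mul_eq_zero.mp h01).resolve_left hs],
              by linarith [(mul_eq_zero.mp h02).resolve_left hs]⟩
    · have hs : pluecker n₁ n₂ 0 2 - pluecker n₁ n₂ 1 3 ≠ 0 := sub_ne_zero.mpr h
      refine ⟨by linarith [(mul_eq_zero.mp h10).resolve_left hs],
              by linarith [(mul_eq_zero.mp h11).resolve_left hs],
              by linarith [(mul_eq_zero.mp h12).resolve_left hs]⟩
    · have hs : pluecker n₁ n₂ 0 3 + pluecker n₁ n₂ 1 2 ≠ 0 := by
        intro h'; exact h (by linarith)
      refine ⟨by linarith [(mul_eq_zero.mp h20).resolve_left hs],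
              by linarith [(mul_eq_zero.mp h21).resolve_left hs],
              by linarith [(mul_eq_zero.mp h22).resolve_left hs]⟩
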